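/- Let μ have density f on R^d, let x satisfy f(x) > 0 and the cone-version Lebesgue density property: for a finite family of cones C_1,…,C_γ of angle π/4 covering R^d, min_j (∫_{x+r[C_j∩B_{0,1}]} f)/λ(r[C_j∩B_{0,1}]) → f(x) as r↓0. Then, conditionally on X_1 = x, the diameter of the Voronoi cell S_1 satisfies lim_{t→∞} limsup_{n→∞} P{n^{1/d} diam(S_1) ≥ t | X_1 = x} = 0. -/

import Mathlib

open MeasureTheory ProbabilityTheory Filter
open scoped ENNReal Pointwise

set_option maxHeartbeats 1000000 in
lemma cone_norm_sub_lt {E : Type*} [NormedAddCommGroup E] [InnerProductSpace ℝ E]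
    (a w z : E) (ha : ‖a‖ = 1)
    (hw : ‖w‖ * Real.cos (Real.pi / 8) ≤ (inner ℝ w a : ℝ))
    (hz : ‖z‖ * Real.cos (Real.pi / 8) ≤ (inner ℝ z a : ℝ))
    (hz0 : z ≠ 0) (hle : ‖z‖ ≤ ‖w‖) : ‖w - z‖ < ‖w‖ := by
  set c := Real.cos (Real.pi / 8) with hc
  have hpi := Real.pi_pos
  have hc0 : 0 < c := Real.cos_pos_of_mem_Ioo ⟨by linarith, by linarith⟩
  have hc1 : c ≤ 1 := Real.cos_le_one _
  have h2c : 2 * c ^ 2 - 1 = Real.sqrt 2 / 2 := by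
    have := Real.cos_two_mul (Real.pi / 8)
    rw [show 2 * (Real.pi / 8) = Real.pi / 4 by ring, Real.cos_pi_div_four] at this
    linarith
  have hz0' : 0 < ‖z‖ := norm_pos_iff.mpr hz0
  have hw0 : 0 < ‖w‖ := lt_of_lt_of_le hz0' hle
  set p : ℝ := inner ℝ w a with hp
  set q : ℝ := inner ℝ z a with hq
  have haa : (inner ℝ a a : ℝ) = 1 := by
    rw [real_inner_self_eq_norm_sq, ha]; norm_num
  have h1 : (inner ℝ (w - p • a) (z - q • a) : ℝ) = (inner ℝ w z : ℝ) - p * q := by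
    simp [inner_sub_left, inner_sub_right, real_inner_smul_left, real_inner_smul_right,
      haa, ha, real_inner_comm z a, ← hp, ← hq]
  have h2 : ‖w - p • a‖ ^ 2 = ‖w‖ ^ 2 - p ^ 2 := by
    rw [norm_sub_sq_real, real_inner_smul_right, norm_smul, ha, mul_one, Real.norm_eq_abs,
      sq_abs, ← hp]
    ring
  have h3 : ‖z - q • a‖ ^ 2 = ‖z‖ ^ 2 - q ^ 2 := by
    rw [norm_sub_sq_real, real_inner_smul_right, norm_smul, ha, mul_one, Real.norm_eq_abs,
      sq_abs, ← hq]
    ring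
  have h4 : |(inner ℝ (w - p • a) (z - q • a) : ℝ)| ≤ ‖w - p • a‖ * ‖z - q • a‖ :=
    abs_real_inner_le_norm _ _
  have h1c : (0:ℝ) ≤ 1 - c ^ 2 := by nlinarith
  have hwn : ‖w - p • a‖ ^ 2 ≤ ‖w‖ ^ 2 * (1 - c ^ 2) := by
    rw [h2]
    nlinarith [mul_nonneg hw0.le hc0.le]
  have hzn : ‖z - q • a‖ ^ 2 ≤ ‖z‖ ^ 2 * (1 - c ^ 2) := by
    rw [h3]
    nlinarith [mul_nonneg hz0'.le hc0.le]
  set M : ℝ := ‖w‖ * ‖z‖ * (1 - c ^ 2) with hM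
  have hM0 : 0 ≤ M := by positivity
  have hsq : (‖w - p • a‖ * ‖z - q • a‖) ^ 2 ≤ M ^ 2 := by
    have h5 := mul_le_mul hwn hzn (sq_nonneg _) (by positivity)
    calc (‖w - p • a‖ * ‖z - q • a‖) ^ 2 = ‖w - p • a‖ ^ 2 * ‖z - q • a‖ ^ 2 := by ring
      _ ≤ ‖w‖ ^ 2 * (1 - c ^ 2) * (‖z‖ ^ 2 * (1 - c ^ 2)) := h5
      _ = M ^ 2 := by rw [hM]; ring
  have hprod : ‖w - p • a‖ * ‖z - q • a‖ ≤ M :=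
    le_of_pow_le_pow_left₀ two_ne_zero hM0 hsq
  have hpq : ‖w‖ * c * (‖z‖ * c) ≤ p * q :=
    mul_le_mul hw hz (mul_nonneg hz0'.le hc0.le) (le_trans (mul_nonneg hw0.le hc0.le) hw)
  have hkey : ‖w‖ * ‖z‖ * (2 * c ^ 2 - 1) ≤ (inner ℝ w z : ℝ) := by
    have hlow : -(‖w - p • a‖ * ‖z - q • a‖) ≤ (inner ℝ (w - p • a) (z - q • a) : ℝ) :=
      (abs_le.mp h4).1
    rw [h1] at hlow
    have hid : ‖w‖ * ‖z‖ * (2 * c ^ 2 - 1) = ‖w‖ * c * (‖z‖ * c) - M := by rw [hM]; ring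
    linarith
  have hs2 : Real.sqrt 2 ^ 2 = 2 := Real.sq_sqrt (by norm_num)
  have hs2' : (1:ℝ) ≤ Real.sqrt 2 := by nlinarith [Real.sqrt_nonneg 2]
  have hs2'' : (1:ℝ) < Real.sqrt 2 := by nlinarith [Real.sqrt_nonneg 2]
  have hA : ‖w‖ * ‖z‖ * (2 * c ^ 2 - 1) = Real.sqrt 2 / 2 * (‖w‖ * ‖z‖) := by
    rw [h2c]; ring
  have hfin : ‖w - z‖ ^ 2 < ‖w‖ ^ 2 := by
    rw [norm_sub_sq_real]
    nlinarith [mul_pos hw0 hz0', mul_pos (sub_pos.mpr hs2'') (mul_pos hw0 hz0'),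
      mul_nonneg hz0'.le (sub_nonneg.mpr hle), hkey, hA]
  calc ‖w - z‖ = Real.sqrt (‖w - z‖ ^ 2) := by rw [Real.sqrt_sq (norm_nonneg _)]
    _ < Real.sqrt (‖w‖ ^ 2) := Real.sqrt_lt_sqrt (by positivity) hfin
    _ = ‖w‖ := Real.sqrt_sq (norm_nonneg _)

lemma prob_all_avoid {Ω : Type*} [MeasurableSpace Ω] (P : Measure Ω) [IsProbabilityMeasure P]
    {E : Type*} [MeasurableSpace E] (X : ℕ → Ω → E) (hmeas : ∀ i, Measurable (X i))
    (hind : iIndepFun X P)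
    (μ : Measure E) [IsProbabilityMeasure μ] (hlaw : ∀ i, Measure.map (X i) P = μ)
    (A : Set E) (hA : MeasurableSet A) (m : ℕ) :
    P {ω | ∀ i ∈ Finset.range m, X i ω ∉ A} = (1 - μ A) ^ m := by
  have hset : {ω | ∀ i ∈ Finset.range m, X i ω ∉ A}
      = ⋂ i ∈ Finset.range m, (X i) ⁻¹' Aᶜ := by
    ext ω; simp
  rw [hset, hind.meas_biInter (fun i _ => ⟨Aᶜ, hA.compl, rfl⟩)]
  have hPi : ∀ i, P ((X i) ⁻¹' Aᶜ) = 1 - μ A := by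
    intro i
    rw [← Measure.map_apply (hmeas i) hA.compl, hlaw i, prob_compl_eq_one_sub hA]
  simp only [hPi]
  rw [Finset.prod_const, Finset.card_range]

lemma vol_cone_ball_pos (d : ℕ) (hd : 0 < d) (a : EuclideanSpace ℝ (Fin d)) (ha : ‖a‖ = 1) :
    0 < volume ({u : EuclideanSpace ℝ (Fin d) |
      ‖u‖ * Real.cos (Real.pi / 8) ≤ (inner ℝ u a : ℝ)} ∩ Metric.closedBall 0 1) := by
  set c := Real.cos (Real.pi / 8) with hc
  have hpi := Real.pi_pos
  have hc0 : 0 < c := Real.cos_pos_of_mem_Ioo ⟨by linarith, by linarith⟩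
  have hc1 : c < 1 := by
    have := Real.cos_lt_cos_of_nonneg_of_le_pi (x := 0) (y := Real.pi / 8) (le_refl 0) (by linarith) (by positivity)
    rwa [Real.cos_zero] at this
  set ε : ℝ := (1 - c) / 8 with hε
  have hε0 : 0 < ε := by rw [hε]; linarith
  have hsub : Metric.ball ((1/2 : ℝ) • a) ε ⊆
      {u : EuclideanSpace ℝ (Fin d) | ‖u‖ * c ≤ (inner ℝ u a : ℝ)} ∩ Metric.closedBall 0 1 := by
    intro v hv
    rw [Metric.mem_ball, dist_eq_norm] at hv
    have hna : ‖(1/2 : ℝ) • a‖ = 1/2 := by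
      rw [norm_smul, ha, Real.norm_eq_abs]; norm_num
    have hnv : ‖v‖ ≤ 1/2 + ε := by
      calc ‖v‖ = ‖(v - (1/2 : ℝ) • a) + (1/2 : ℝ) • a‖ := by rw [sub_add_cancel]
        _ ≤ ‖v - (1/2 : ℝ) • a‖ + ‖(1/2 : ℝ) • a‖ := norm_add_le _ _
        _ ≤ ε + 1/2 := by rw [hna]; linarith
        _ = 1/2 + ε := by ring
    have hinner : (1:ℝ)/2 - ε ≤ (inner ℝ v a : ℝ) := by
      have hsplit : (inner ℝ v a : ℝ) = (inner ℝ ((1/2 : ℝ) • a) a : ℝ)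
          + (inner ℝ (v - (1/2 : ℝ) • a) a : ℝ) := by
        rw [← inner_add_left]; norm_num
      have h1 : (inner ℝ ((1/2 : ℝ) • a) a : ℝ) = 1/2 := by
        rw [real_inner_smul_left, real_inner_self_eq_norm_sq, ha]; norm_num
      have h2 : |(inner ℝ (v - (1/2 : ℝ) • a) a : ℝ)| ≤ ε := by
        calc |(inner ℝ (v - (1/2 : ℝ) • a) a : ℝ)| ≤ ‖v - (1/2 : ℝ) • a‖ * ‖a‖ :=
            abs_real_inner_le_norm _ _
          _ ≤ ε := by rw [ha, mul_one]; exact hv.le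
      have := (abs_le.mp h2).1
      linarith
    constructor
    · show ‖v‖ * c ≤ (inner ℝ v a : ℝ)
      have : ‖v‖ * c ≤ (1/2 + ε) * c := by
        apply mul_le_mul_of_nonneg_right hnv hc0.le
      have hεc : (1/2 + ε) * c ≤ 1/2 - ε := by
        rw [hε]; nlinarith
      linarith
    · rw [Metric.mem_closedBall, dist_zero_right]
      rw [hε] at hnv; linarith
  calc (0 : ℝ≥0∞) < volume (Metric.ball ((1/2 : ℝ) • a) ε) :=
      Metric.measure_ball_pos _ _ hε0
    _ ≤ _ := measure_mono hsub


set_option maxHeartbeats 2000000 in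
/-- Diameter of a typical Voronoi cell: if `x` satisfies `f(x) > 0` and the
cone-version Lebesgue density property (for a family of cones of angle `π/4`
covering `ℝ^d`), then conditionally on `X_1 = x`,
`lim_{t→∞} limsup_{n→∞} P{n^{1/d} diam(S_1) ≥ t} = 0`. -/
theorem voronoi_diam_rate
    (d : ℕ) (hd : 0 < d)
    (μ : Measure (EuclideanSpace ℝ (Fin d))) [IsProbabilityMeasure μ]
    (f : EuclideanSpace ℝ (Fin d) → ℝ≥0∞) (hf : μ = volume.withDensity f)
    (x : EuclideanSpace ℝ (Fin d)) (hfx : 0 < f x) (hfx' : f x < ∞)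
    -- the cones `C j` of angle `π/4` (half-angle `π/8`) covering `ℝ^d`
    (γ : ℕ) (a : Fin γ → EuclideanSpace ℝ (Fin d)) (ha : ∀ j, ‖a j‖ = 1)
    (C : Fin γ → Set (EuclideanSpace ℝ (Fin d)))
    (hC : ∀ j, C j = {u | ‖u‖ * Real.cos (Real.pi / 8) ≤ (inner ℝ u (a j) : ℝ)})
    (hcover : (⋃ j, C j) = Set.univ)
    -- the cone-version Lebesgue density property at `x`
    (hdens : ∀ j, Tendsto
      (fun r : ℝ =>
        (μ ((fun u => x + r • u) '' (C j ∩ Metric.closedBall 0 1))).toReal /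
          (volume ((fun u => r • u) ''
            (C j ∩ Metric.closedBall (0 : EuclideanSpace ℝ (Fin d)) 1))).toReal)
      (nhdsWithin 0 (Set.Ioi 0)) (nhds (f x).toReal))
    -- the i.i.d. sample
    {Ω : Type*} [MeasurableSpace Ω] (P : Measure Ω) [IsProbabilityMeasure P]
    (X : ℕ → Ω → EuclideanSpace ℝ (Fin d))
    (hmeas : ∀ i, Measurable (X i))
    (hind : iIndepFun X P)
    (hlaw : ∀ i, Measure.map (X i) P = μ)
    -- the Voronoi cell of `x` determined by `x` and `n - 1` sample points
    (S : ℕ → Ω → Set (EuclideanSpace ℝ (Fin d)))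
    (hS : ∀ n ω, S n ω =
      {u | ∀ i ∈ Finset.range (n - 1), dist u x ≤ dist u (X i ω)}) :
    Tendsto
      (fun t : ℝ =>
        Filter.limsup
          (fun n : ℕ =>
            P {ω | ENNReal.ofReal t ≤
              (n : ℝ≥0∞) ^ ((1 : ℝ) / d) * EMetric.diam (S n ω)})
          atTop)
      atTop (nhds (0 : ℝ≥0∞)) := by
  classical
  have hpi := Real.pi_pos
  set c : ℝ := Real.cos (Real.pi / 8) with hcdef
  set fx : ℝ := (f x).toReal with hfxdef
  have hfx0 : 0 < fx := ENNReal.toReal_pos hfx.ne' hfx'.ne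
  set K : Fin γ → Set (EuclideanSpace ℝ (Fin d)) :=
    fun j => C j ∩ Metric.closedBall 0 1 with hK
  have hCclosed : ∀ j, IsClosed (C j) := by
    intro j; rw [hC j]
    exact isClosed_le (continuous_norm.mul continuous_const)
      (continuous_id.inner continuous_const)
  have hKcpt : ∀ j, IsCompact (K j) := fun j =>
    (isCompact_closedBall (0 : EuclideanSpace ℝ (Fin d)) 1).inter_left (hCclosed j)
  have hvKpos : ∀ j, 0 < volume (K j) := by
    intro j
    have := vol_cone_ball_pos d hd (a j) (ha j)
    rw [hK]; simp only
    rw [hC j]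
    exact this
  have hvKfin : ∀ j, volume (K j) < ∞ := fun j =>
    lt_of_le_of_lt (measure_mono Set.inter_subset_right) measure_closedBall_lt_top
  set q : Fin γ → ℝ := fun j => fx / 2 * (volume (K j)).toReal with hqdef
  have hq0 : ∀ j, 0 < q j := by
    intro j
    have h := ENNReal.toReal_pos (hvKpos j).ne' (hvKfin j).ne
    rw [hqdef]
    positivity
  haveI : Nonempty (Fin d) := Fin.pos_iff_nonempty.mp hd
  have hμx : μ {x} = 0 := by
    rw [hf, withDensity_apply _ (measurableSet_singleton x),
      Measure.restrict_eq_zero.mpr (measure_singleton x), lintegral_zero_measure]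
  -- per-cone measure lower bound near 0
  have hbnd : ∀ j : Fin γ, ∀ᶠ r in nhdsWithin 0 (Set.Ioi 0),
      ENNReal.ofReal (q j * r ^ d) ≤ μ ((fun u => x + r • u) '' K j) := by
    intro j
    have h1 := (hdens j).eventually (eventually_gt_nhds (by linarith : fx / 2 < fx))
    filter_upwards [h1, self_mem_nhdsWithin] with r hr hrpos
    have hrpos' : (0:ℝ) < r := hrpos
    have himg : (fun u : EuclideanSpace ℝ (Fin d) => r • u) '' (K j) = r • K j :=
      Set.image_smul
    have hvol : volume (r • K j) = ENNReal.ofReal (r ^ d) * volume (K j) := by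
      rw [Measure.addHaar_smul_of_nonneg volume hrpos'.le, finrank_euclideanSpace_fin]
    have hDval : (volume ((fun u : EuclideanSpace ℝ (Fin d) => r • u) '' (K j))).toReal
        = r ^ d * (volume (K j)).toReal := by
      rw [himg, hvol, ENNReal.toReal_mul, ENNReal.toReal_ofReal (by positivity)]
    have hvKr : 0 < (volume (K j)).toReal :=
      ENNReal.toReal_pos (hvKpos j).ne' (hvKfin j).ne
    have hDpos : 0 < (volume ((fun u : EuclideanSpace ℝ (Fin d) => r • u) '' (K j))).toReal := by
      rw [hDval]; positivity
    rw [lt_div_iff₀ hDpos, hDval] at hr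
    calc ENNReal.ofReal (q j * r ^ d)
        ≤ ENNReal.ofReal ((μ ((fun u => x + r • u) '' K j)).toReal) := by
          apply ENNReal.ofReal_le_ofReal
          rw [hqdef]
          nlinarith
      _ = μ ((fun u => x + r • u) '' K j) := ENNReal.ofReal_toReal (measure_ne_top μ _)
  -- the dominating function
  set G : ℝ → ℝ≥0∞ :=
    fun t => ∑ j : Fin γ, ENNReal.ofReal (Real.exp (-(q j * (t/4)^d) / 2)) with hGdef
  have hGzero : Tendsto G atTop (nhds 0) := by
    have h0 : (0:ℝ≥0∞) = ∑ _j : Fin γ, 0 := by simp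
    rw [hGdef, h0]
    apply tendsto_finset_sum
    intro j _
    have h1 : Tendsto (fun t : ℝ => (t/4)^d) atTop atTop :=
      (tendsto_pow_atTop hd.ne').comp (Tendsto.atTop_div_const (by norm_num) tendsto_id)
    have h2 : Tendsto (fun t : ℝ => -(q j * (t/4)^d) / 2) atTop atBot := by
      have h3 : Tendsto (fun t : ℝ => (-(q j) / 2) * (t/4)^d) atTop atBot :=
        Tendsto.const_mul_atTop_of_neg (by have := hq0 j; linarith) h1
      refine h3.congr fun t => by ring
    have h4 : Tendsto (fun t : ℝ => Real.exp (-(q j * (t/4)^d) / 2)) atTop (nhds 0) :=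
      Real.tendsto_exp_atBot.comp h2
    have h5 := (ENNReal.continuous_ofReal.tendsto 0).comp h4
    simpa [Function.comp_def] using h5
  -- main estimate for fixed t > 0
  have hmain : ∀ t : ℝ, 0 < t →
      Filter.limsup (fun n : ℕ => P {ω | ENNReal.ofReal t ≤
        (n : ℝ≥0∞) ^ ((1 : ℝ) / d) * EMetric.diam (S n ω)}) atTop ≤ G t := by
    intro t ht
    set ρ : ℕ → ℝ := fun n => t / 4 * (((n:ℝ)) ^ ((1:ℝ)/d))⁻¹ with hρdef
    have hd' : (0:ℝ) < (d:ℝ) := by exact_mod_cast hd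
    have hρpos : ∀ n : ℕ, 1 ≤ n → 0 < ρ n := by
      intro n hn
      have hn0 : (0:ℝ) < (n:ℝ) := by exact_mod_cast hn
      have h2 := Real.rpow_pos_of_pos hn0 ((1:ℝ)/d)
      rw [hρdef]
      positivity
    have hρ0 : Tendsto ρ atTop (nhdsWithin 0 (Set.Ioi 0)) := by
      rw [tendsto_nhdsWithin_iff]
      constructor
      · have h1 : Tendsto (fun n : ℕ => (((n:ℝ)) ^ ((1:ℝ)/d))⁻¹) atTop (nhds 0) :=
          (((tendsto_rpow_atTop (by positivity)).comp
            tendsto_natCast_atTop_atTop).inv_tendsto_atTop)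
        have h2 := h1.const_mul (t/4)
        rw [mul_zero] at h2
        exact h2
      · filter_upwards [eventually_ge_atTop 1] with n hn
        exact hρpos n hn
    have hρd : ∀ n : ℕ, 1 ≤ n → ρ n ^ d = (t/4)^d / (n:ℝ) := by
      intro n hn
      have hn0 : (0:ℝ) ≤ (n:ℝ) := Nat.cast_nonneg n
      have hm : (((n:ℝ)) ^ ((1:ℝ)/d)) ^ (d:ℕ) = (n:ℝ) := by
        rw [← Real.rpow_natCast (((n:ℝ)) ^ ((1:ℝ)/d)) d, ← Real.rpow_mul hn0,
          one_div, inv_mul_cancel₀ (by exact_mod_cast hd.ne' : (d:ℝ) ≠ 0), Real.rpow_one]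
      rw [hρdef]
      simp only
      rw [mul_pow, inv_pow, hm]
      ring
    have hev : ∀ᶠ n : ℕ in atTop,
        P {ω | ENNReal.ofReal t ≤ (n : ℝ≥0∞) ^ ((1 : ℝ) / d) * EMetric.diam (S n ω)} ≤ G t := by
      have hall : ∀ᶠ n : ℕ in atTop, ∀ j : Fin γ,
          ENNReal.ofReal (q j * ρ n ^ d) ≤ μ ((fun u => x + ρ n • u) '' K j) :=
        eventually_all.mpr fun j => hρ0.eventually (hbnd j)
      filter_upwards [hall, eventually_ge_atTop 2] with n hn hn2
      have hn1 : 1 ≤ n := le_trans (by norm_num) hn2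
      have hρn := hρpos n hn1
      set Aset : Fin γ → Set (EuclideanSpace ℝ (Fin d)) :=
        fun j => ((fun u => x + ρ n • u) '' K j) \ {x} with hAdef
      have hAmeas : ∀ j, MeasurableSet (Aset j) := by
        intro j
        have hcpt : IsCompact ((fun u => x + ρ n • u) '' K j) :=
          (hKcpt j).image (continuous_const.add (continuous_id.const_smul (ρ n)))
        exact hcpt.isClosed.measurableSet.diff (measurableSet_singleton x)
      -- event inclusion
      have hincl : {ω | ENNReal.ofReal t ≤ (n : ℝ≥0∞) ^ ((1 : ℝ) / d) * EMetric.diam (S n ω)}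
          ⊆ ⋃ j, {ω | ∀ i ∈ Finset.range (n-1), X i ω ∉ Aset j} := by
        intro ω hω
        simp only [Set.mem_setOf_eq] at hω
        have hnpos : (0:ℝ) < (n:ℝ) := by exact_mod_cast hn1
        have hm0 : (0:ℝ) < ((n:ℝ)) ^ ((1:ℝ)/d) := Real.rpow_pos_of_pos hnpos _
        have hNval : (n : ℝ≥0∞) ^ ((1:ℝ)/d) = ENNReal.ofReal (((n:ℝ)) ^ ((1:ℝ)/d)) := by
          rw [← ENNReal.ofReal_natCast n, ENNReal.ofReal_rpow_of_pos hnpos]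
        have hN0 : (n : ℝ≥0∞) ^ ((1:ℝ)/d) ≠ 0 := by
          rw [hNval]
          simpa using hm0
        have hNfin : (n : ℝ≥0∞) ^ ((1:ℝ)/d) ≠ ∞ := by
          rw [hNval]; exact ENNReal.ofReal_ne_top
        have hediam : ENNReal.ofReal (4 * ρ n) ≤ EMetric.diam (S n ω) := by
          have he : ENNReal.ofReal (4 * ρ n) = ENNReal.ofReal t / (n : ℝ≥0∞) ^ ((1:ℝ)/d) := by
            rw [hNval, ← ENNReal.ofReal_div_of_pos hm0]
            congr 1
            rw [hρdef]
            field_simp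
          rw [he, ENNReal.div_le_iff_le_mul (Or.inl hN0) (Or.inl hNfin)]
          rw [mul_comm]
          exact hω
        have hdiamgt : ¬ (EMetric.diam (S n ω) ≤ ENNReal.ofReal (3 * ρ n)) := by
          apply not_le.mpr
          exact lt_of_lt_of_le
            ((ENNReal.ofReal_lt_ofReal_iff (by positivity)).mpr (by linarith)) hediam
        rw [show EMetric.diam (S n ω) = Metric.ediam (S n ω) from rfl, Metric.ediam_le_iff] at hdiamgt
        push_neg at hdiamgt
        obtain ⟨u, hu, v, hv, huv⟩ := hdiamgt
        have hduv : 3 * ρ n < dist u v := by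
          by_contra h
          push_neg at h
          rw [edist_dist] at huv
          exact absurd (ENNReal.ofReal_le_ofReal h) (not_le.mpr huv)
        obtain ⟨y, hyS, hyfar⟩ : ∃ y ∈ S n ω, ρ n < dist y x := by
          rcases le_or_gt (dist u x) (ρ n) with h | h
          · refine ⟨v, hv, ?_⟩
            have h3 := dist_triangle u x v
            rw [dist_comm x v] at h3
            linarith
          · exact ⟨u, hu, h⟩
        obtain ⟨j, hwj⟩ : ∃ j, y - x ∈ C j := by
          have hmem : y - x ∈ ⋃ j, C j := by rw [hcover]; trivial
          exact Set.mem_iUnion.mp hmem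
        refine Set.mem_iUnion.mpr ⟨j, ?_⟩
        show ∀ i ∈ Finset.range (n-1), X i ω ∉ Aset j
        intro i hi hmem
        obtain ⟨hmem1, hmem2⟩ := hmem
        obtain ⟨v', hv'K, hveq⟩ := hmem1
        have hv'C : v' ∈ C j := hv'K.1
        have hv'B : ‖v'‖ ≤ 1 := by
          have h := hv'K.2
          rwa [Metric.mem_closedBall, dist_zero_right] at h
        set z := ρ n • v' with hzdef
        have hveq' : x + ρ n • v' = X i ω := hveq
        have hz0 : z ≠ 0 := by
          intro h0
          apply hmem2
          rw [Set.mem_singleton_iff, ← hveq']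
          have h0' : ρ n • v' = 0 := h0
          rw [h0', add_zero]
        have hzcone : ‖z‖ * c ≤ (inner ℝ z (a j) : ℝ) := by
          rw [hzdef, norm_smul, Real.norm_eq_abs, abs_of_pos hρn, real_inner_smul_left]
          have h5 : ‖v'‖ * c ≤ (inner ℝ v' (a j) : ℝ) := by
            have h6 := hv'C; rw [hC j] at h6; exact h6
          nlinarith
        have hwcone : ‖y - x‖ * c ≤ (inner ℝ (y - x) (a j) : ℝ) := by
          have h6 := hwj; rw [hC j] at h6; exact h6
        have hzle : ‖z‖ ≤ ‖y - x‖ := by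
          rw [hzdef, norm_smul, Real.norm_eq_abs, abs_of_pos hρn]
          rw [← dist_eq_norm]
          nlinarith [norm_nonneg v']
        have hlt := cone_norm_sub_lt (a j) (y - x) z (ha j) hwcone hzcone hz0 hzle
        have hSy := hyS
        rw [hS n ω] at hSy
        have hcontra := hSy i hi
        rw [← hveq'] at hcontra
        have he1 : dist y (x + ρ n • v') = ‖(y - x) - z‖ := by
          rw [dist_eq_norm, hzdef]
          congr 1
          abel
        have he2 : dist y x = ‖y - x‖ := dist_eq_norm y x
        rw [he1, he2] at hcontra
        linarith
      -- probability bound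
      calc P {ω | ENNReal.ofReal t ≤ (n : ℝ≥0∞) ^ ((1 : ℝ) / d) * EMetric.diam (S n ω)}
          ≤ P (⋃ j, {ω | ∀ i ∈ Finset.range (n-1), X i ω ∉ Aset j}) := measure_mono hincl
        _ ≤ ∑' j, P {ω | ∀ i ∈ Finset.range (n-1), X i ω ∉ Aset j} := measure_iUnion_le _
        _ = ∑ j : Fin γ, P {ω | ∀ i ∈ Finset.range (n-1), X i ω ∉ Aset j} := tsum_fintype _
        _ = ∑ j : Fin γ, (1 - μ (Aset j)) ^ (n-1) := by
            refine Finset.sum_congr rfl fun j _ => ?_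
            exact prob_all_avoid P X hmeas hind μ hlaw (Aset j) (hAmeas j) (n-1)
        _ ≤ G t := by
            rw [hGdef]
            refine Finset.sum_le_sum fun j _ => ?_
            have hμA : μ (Aset j) = μ ((fun u => x + ρ n • u) '' K j) := by
              rw [hAdef]
              exact measure_diff_null hμx
            set s : ℝ := q j * (t/4)^d with hsdef
            have hs0 : 0 < s := by
              have := hq0 j
              rw [hsdef]
              positivity
            have hlb : ENNReal.ofReal (s / n) ≤ μ (Aset j) := by
              rw [hμA]
              have h7 := hn j
              rw [hρd n hn1] at h7
              rw [hsdef, show q j * (t/4)^d / (n:ℝ) = q j * ((t/4)^d / (n:ℝ)) by ring]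
              exact h7
            have hnR : (0:ℝ) < (n:ℝ) := by exact_mod_cast hn1
            have h1 : (1:ℝ≥0∞) - μ (Aset j) ≤ ENNReal.ofReal (Real.exp (-(s/n))) := by
              calc (1:ℝ≥0∞) - μ (Aset j) ≤ 1 - ENNReal.ofReal (s/n) := tsub_le_tsub_left hlb 1
                _ = ENNReal.ofReal (1 - s/n) := by
                    rw [← ENNReal.ofReal_one, ← ENNReal.ofReal_sub _ (by positivity)]
                _ ≤ ENNReal.ofReal (Real.exp (-(s/n))) := by
                    apply ENNReal.ofReal_le_ofReal
                    have h8 := Real.add_one_le_exp (-(s/n))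
                    linarith
            calc (1 - μ (Aset j)) ^ (n-1)
                ≤ (ENNReal.ofReal (Real.exp (-(s/n)))) ^ (n-1) :=
                  pow_le_pow_left₀ zero_le h1 _
              _ = ENNReal.ofReal (Real.exp (-(s/n)) ^ (n-1)) :=
                  (ENNReal.ofReal_pow (Real.exp_nonneg _) _).symm
              _ = ENNReal.ofReal (Real.exp (((n-1 : ℕ):ℝ) * (-(s/n)))) := by
                  rw [Real.exp_nat_mul]
              _ ≤ ENNReal.ofReal (Real.exp (-(q j * (t/4)^d) / 2)) := by
                  apply ENNReal.ofReal_le_ofReal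
                  apply Real.exp_le_exp.mpr
                  have hcast : ((n-1 : ℕ):ℝ) = (n:ℝ) - 1 := by
                    rw [Nat.cast_sub hn1]; norm_num
                  rw [hcast, show -(q j * (t/4)^d) / 2 = -(s/2) by rw [hsdef]; ring]
                  have hn2' : (2:ℝ) ≤ (n:ℝ) := by exact_mod_cast hn2
                  rw [show ((n:ℝ) - 1) * (-(s/(n:ℝ))) = -(s * ((n:ℝ)-1) / (n:ℝ)) by ring,
                    neg_le_neg_iff, div_le_div_iff₀ two_pos hnR]
                  nlinarith [mul_nonneg hs0.le (by linarith : (0:ℝ) ≤ (n:ℝ) - 2)]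
    exact limsup_le_of_le (h := hev)
  apply tendsto_of_tendsto_of_tendsto_of_le_of_le' tendsto_const_nhds hGzero
  · exact Eventually.of_forall fun t => zero_le
  · filter_upwards [eventually_gt_atTop 0] with t ht
    exact hmain t ht
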